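/- Let R be the minimum of two i.i.d. chi-squared random variables each with n₁-1 degrees of freedom, where n₁ ≥ 3. Then for η > 0, E[2Φ̄(η√R)] ≤ 2Γ((n₁-2)/2)/(√π · Γ((n₁-1)/2) · η · (η²+1)^((n₁-2)/2)). -/

import Mathlib

open Real MeasureTheory

/-- Complementary CDF of the standard normal distribution. -/
noncomputable def stdNormalCCDF (x : ℝ) : ℝ :=
  ∫ t in Set.Ioi x, Real.exp (-t ^ 2 / 2) / Real.sqrt (2 * Real.pi)

/-- Density of the chi-squared distribution with `ν` degrees of freedom
(for arguments in `(0,∞)`). -/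
noncomputable def chiSqPDF (ν : ℝ) (x : ℝ) : ℝ :=
  x ^ (ν / 2 - 1) * Real.exp (-x / 2) / ((2 : ℝ) ^ (ν / 2) * Real.Gamma (ν / 2))

/-- CDF of the chi-squared distribution with `ν` degrees of freedom. -/
noncomputable def chiSqCDF (ν : ℝ) (x : ℝ) : ℝ :=
  ∫ t in Set.Ioc (0 : ℝ) x, chiSqPDF ν t

section AuxLemmas
open Set Filter
lemma stdNormalCCDF_nonneg (x : ℝ) : 0 ≤ stdNormalCCDF x :=
  setIntegral_nonneg measurableSet_Ioi (fun t _ => by positivity)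

lemma gauss_eq : (fun t : ℝ => Real.exp (-t ^ 2 / 2)) = fun t => Real.exp (-(1/2 * t ^ 2)) := by
  funext t; ring_nf

lemma integral_id_mul_gauss (y : ℝ) (hy : 0 ≤ y) :
    ∫ t in Set.Ioi y, t * Real.exp (-t ^ 2 / 2) = Real.exp (-y ^ 2 / 2) := by
  have hderiv : ∀ t ∈ Set.Ici y, HasDerivAt (fun t : ℝ => -Real.exp (-t ^ 2 / 2))
      (t * Real.exp (-t ^ 2 / 2)) t := by
    intro t _
    have h1 : HasDerivAt (fun t : ℝ => -t ^ 2 / 2) (-t) t := by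
      have := ((hasDerivAt_pow 2 t).neg.div_const 2)
      simpa using this.congr_deriv (by ring)
    have := (h1.exp).neg
    exact this.congr_deriv (by ring)
  have htend : Tendsto (fun t : ℝ => -Real.exp (-t ^ 2 / 2)) atTop (nhds 0) := by
    rw [show (0:ℝ) = -0 by ring]
    apply Tendsto.neg
    apply Real.tendsto_exp_atBot.comp
    have : Tendsto (fun t : ℝ => t ^ 2 / 2) atTop atTop :=
      (tendsto_pow_atTop two_ne_zero).atTop_div_const (by norm_num)
    simpa [neg_div] using tendsto_neg_atBot_iff.mpr this
  have := integral_Ioi_of_hasDerivAt_of_nonneg' hderiv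
    (fun t ht => by
      have h0 : (0:ℝ) ≤ t := le_trans hy (le_of_lt ht)
      positivity) htend
  simpa using this

lemma integrableOn_id_mul_gauss (y : ℝ) (hy : 0 ≤ y) :
    IntegrableOn (fun t : ℝ => t * Real.exp (-t ^ 2 / 2)) (Set.Ioi y) := by
  have hderiv : ∀ t ∈ Set.Ici y, HasDerivAt (fun t : ℝ => -Real.exp (-t ^ 2 / 2))
      (t * Real.exp (-t ^ 2 / 2)) t := by
    intro t _
    have h1 : HasDerivAt (fun t : ℝ => -t ^ 2 / 2) (-t) t := by
      have := ((hasDerivAt_pow 2 t).neg.div_const 2)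
      simpa using this.congr_deriv (by ring)
    have := (h1.exp).neg
    exact this.congr_deriv (by ring)
  have htend : Tendsto (fun t : ℝ => -Real.exp (-t ^ 2 / 2)) atTop (nhds 0) := by
    rw [show (0:ℝ) = -0 by ring]
    apply Tendsto.neg
    apply Real.tendsto_exp_atBot.comp
    have : Tendsto (fun t : ℝ => t ^ 2 / 2) atTop atTop :=
      (tendsto_pow_atTop two_ne_zero).atTop_div_const (by norm_num)
    simpa [neg_div] using tendsto_neg_atBot_iff.mpr this
  exact integrableOn_Ioi_deriv_of_nonneg' hderiv
    (fun t ht => by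
      have h0 : (0:ℝ) ≤ t := le_trans hy (le_of_lt ht)
      positivity) htend

lemma mills (y : ℝ) (hy : 0 < y) :
    stdNormalCCDF y ≤ Real.exp (-y ^ 2 / 2) / (y * Real.sqrt (2 * Real.pi)) := by
  have hs : (0:ℝ) < Real.sqrt (2 * Real.pi) := Real.sqrt_pos.mpr (by positivity)
  have hint1 : IntegrableOn (fun t : ℝ => Real.exp (-t ^ 2 / 2) / Real.sqrt (2 * Real.pi))
      (Set.Ioi y) := by
    have h := integrable_exp_neg_mul_sq (show (0:ℝ) < 1/2 by norm_num)
    have : Integrable (fun t : ℝ => Real.exp (-t ^ 2 / 2)) :=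
      h.congr (Filter.Eventually.of_forall fun t => by simp only []; congr 1; ring)
    exact (this.div_const _).integrableOn
  have hint2 : IntegrableOn
      (fun t : ℝ => t * Real.exp (-t ^ 2 / 2) / (y * Real.sqrt (2 * Real.pi)))
      (Set.Ioi y) := (integrableOn_id_mul_gauss y hy.le).div_const _
  have hle : stdNormalCCDF y ≤
      ∫ t in Set.Ioi y, t * Real.exp (-t ^ 2 / 2) / (y * Real.sqrt (2 * Real.pi)) := by
    rw [stdNormalCCDF]
    refine setIntegral_mono_on hint1 hint2 measurableSet_Ioi (fun t ht => ?_)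
    have hty : y < t := ht
    rw [div_le_div_iff₀ hs (by positivity)]
    have h1 : Real.exp (-t ^ 2 / 2) * y ≤ Real.exp (-t ^ 2 / 2) * t :=
      mul_le_mul_of_nonneg_left hty.le (Real.exp_nonneg _)
    nlinarith [Real.exp_nonneg (-t ^ 2 / 2), hs.le]
  calc stdNormalCCDF y ≤ _ := hle
    _ = Real.exp (-y ^ 2 / 2) / (y * Real.sqrt (2 * Real.pi)) := by
        rw [integral_div, integral_id_mul_gauss y hy.le]

lemma chiSqPDF_nonneg (ν : ℝ) (hν : 0 < ν) (x : ℝ) (hx : 0 ≤ x) : 0 ≤ chiSqPDF ν x := by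
  have hΓ : 0 < Real.Gamma (ν / 2) := Real.Gamma_pos_of_pos (by positivity)
  unfold chiSqPDF; positivity

lemma integrableOn_chiSqPDF (ν : ℝ) (hν : 0 < ν) :
    IntegrableOn (chiSqPDF ν) (Set.Ioi (0:ℝ)) := by
  have h := integrableOn_rpow_mul_exp_neg_mul_rpow
    (show (-1:ℝ) < ν / 2 - 1 by linarith [hν]) (one_pos : (0:ℝ) < 1)
    (show (0:ℝ) < 1/2 by norm_num)
  have h2 : IntegrableOn (fun x : ℝ => x ^ (ν / 2 - 1) * Real.exp (-x / 2)) (Set.Ioi 0) := by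
    refine (h.congr_fun (fun x hx => ?_) measurableSet_Ioi)
    dsimp only; rw [Real.rpow_one]; congr 1; ring
  exact h2.div_const _

lemma integral_chiSqPDF (ν : ℝ) (hν : 0 < ν) :
    ∫ x in Set.Ioi (0:ℝ), chiSqPDF ν x = 1 := by
  have hΓ : 0 < Real.Gamma (ν / 2) := Real.Gamma_pos_of_pos (by positivity)
  have key : ∫ x in Set.Ioi (0:ℝ), x ^ (ν / 2 - 1) * Real.exp (-((1/2:ℝ) * x))
      = (1 / (1/2:ℝ)) ^ (ν / 2) * Real.Gamma (ν / 2) :=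
    Real.integral_rpow_mul_exp_neg_mul_Ioi (by positivity) (by norm_num)
  have h2 : ∫ x in Set.Ioi (0:ℝ), chiSqPDF ν x
      = (∫ x in Set.Ioi (0:ℝ), x ^ (ν / 2 - 1) * Real.exp (-((1/2:ℝ) * x)))
        / ((2 : ℝ) ^ (ν / 2) * Real.Gamma (ν / 2)) := by
    rw [← integral_div]
    refine setIntegral_congr_fun measurableSet_Ioi (fun x hx => ?_)
    unfold chiSqPDF; congr 2; ring
  rw [h2, key]
  have : ((1:ℝ) / (1/2)) = 2 := by norm_num
  rw [this]
  field_simp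

lemma chiSqCDF_nonneg (ν : ℝ) (hν : 0 < ν) (x : ℝ) : 0 ≤ chiSqCDF ν x :=
  setIntegral_nonneg measurableSet_Ioc (fun t ht => chiSqPDF_nonneg ν hν t ht.1.le)

lemma chiSqCDF_le_one (ν : ℝ) (hν : 0 < ν) (x : ℝ) : chiSqCDF ν x ≤ 1 := by
  rw [← integral_chiSqPDF ν hν]
  unfold chiSqCDF
  exact setIntegral_mono_set (integrableOn_chiSqPDF ν hν)
    ((ae_restrict_iff' measurableSet_Ioi).mpr (Filter.Eventually.of_forall
      fun t ht => chiSqPDF_nonneg ν hν t ht.le))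
    (HasSubset.Subset.eventuallyLE Set.Ioc_subset_Ioi_self)

end AuxLemmas

set_option maxHeartbeats 1000000 in
/-- Bound on `E[2Φ̄(η√R)]` where `R` is the minimum of two i.i.d. chi-squared
random variables with `n₁ - 1` degrees of freedom (so `R` has density
`f_R(x) = 2(1 - F(x)) f(x)`): for `η > 0` and `n₁ ≥ 3`,
`E[2Φ̄(η√R)] ≤ 2Γ((n₁-2)/2)/(√π Γ((n₁-1)/2) η (η²+1)^{(n₁-2)/2})`. -/
theorem expectation_ccdf_min_chiSq_le (n₁ : ℕ) (hn : 3 ≤ n₁) (η : ℝ) (hη : 0 < η) :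
    (∫ x in Set.Ioi (0 : ℝ),
        2 * stdNormalCCDF (η * Real.sqrt x) *
          (2 * (1 - chiSqCDF ((n₁ : ℝ) - 1) x) * chiSqPDF ((n₁ : ℝ) - 1) x))
      ≤ 2 * Real.Gamma (((n₁ : ℝ) - 2) / 2) /
          (Real.sqrt Real.pi * Real.Gamma (((n₁ : ℝ) - 1) / 2) * η *
            (η ^ 2 + 1) ^ (((n₁ : ℝ) - 2) / 2)) := by
  have hn3 : (3:ℝ) ≤ (n₁:ℝ) := by exact_mod_cast hn
  set ν : ℝ := (n₁:ℝ) - 1 with hνdef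
  set s : ℝ := ((n₁:ℝ) - 2) / 2 with hsdef
  have hν : 0 < ν := by simp only [hνdef]; linarith
  have hs : 0 < s := by simp only [hsdef]; linarith
  have hsν : ν / 2 - 1 = s - 1 + 1/2 := by simp only [hνdef, hsdef]; ring
  have hΓν : 0 < Real.Gamma (ν / 2) := Real.Gamma_pos_of_pos (by positivity)
  set b : ℝ := (η ^ 2 + 1) / 2 with hbdef
  have hb : 0 < b := by positivity
  set D : ℝ := (2:ℝ) ^ (ν / 2) * Real.Gamma (ν / 2) with hDdef
  have hD : 0 < D := by positivity
  set C : ℝ := 4 / (η * Real.sqrt (2 * Real.pi) * D) with hCdef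
  set g : ℝ → ℝ := fun x => C * (x ^ (s - 1) * Real.exp (-(b * x))) with hgdef
  have hsqrt2pi : (0:ℝ) < Real.sqrt (2 * Real.pi) := Real.sqrt_pos.mpr (by positivity)
  -- integrability of g
  have hgint : IntegrableOn g (Set.Ioi (0:ℝ)) := by
    have h := integrableOn_rpow_mul_exp_neg_mul_rpow
      (show (-1:ℝ) < s - 1 by linarith) (one_pos : (0:ℝ) < 1) hb
    have h2 : IntegrableOn (fun x : ℝ => x ^ (s - 1) * Real.exp (-(b * x))) (Set.Ioi 0) := by
      refine h.congr_fun (fun x hx => ?_) measurableSet_Ioi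
      dsimp only; rw [Real.rpow_one, neg_mul]
    exact h2.const_mul _
  -- pointwise bound
  have hpt : ∀ x ∈ Set.Ioi (0:ℝ),
      2 * stdNormalCCDF (η * Real.sqrt x) *
        (2 * (1 - chiSqCDF ν x) * chiSqPDF ν x) ≤ g x := by
    intro x hx
    have hx0 : (0:ℝ) < x := hx
    have hsx : 0 < Real.sqrt x := Real.sqrt_pos.mpr hx0
    have hy : 0 < η * Real.sqrt x := by positivity
    have hf : 0 ≤ chiSqPDF ν x := chiSqPDF_nonneg ν hν x hx0.le
    have hccdf : 0 ≤ stdNormalCCDF (η * Real.sqrt x) := stdNormalCCDF_nonneg _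
    have hF1 : 1 - chiSqCDF ν x ≤ 1 := by linarith [chiSqCDF_nonneg ν hν x]
    have hF0 : 0 ≤ 1 - chiSqCDF ν x := by linarith [chiSqCDF_le_one ν hν x]
    have step1 : 2 * stdNormalCCDF (η * Real.sqrt x) *
        (2 * (1 - chiSqCDF ν x) * chiSqPDF ν x)
        ≤ 2 * stdNormalCCDF (η * Real.sqrt x) * (2 * chiSqPDF ν x) := by
      have : 2 * (1 - chiSqCDF ν x) * chiSqPDF ν x ≤ 2 * chiSqPDF ν x := by nlinarith
      nlinarith
    have hM := mills (η * Real.sqrt x) hy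
    have step2 : 2 * stdNormalCCDF (η * Real.sqrt x) * (2 * chiSqPDF ν x)
        ≤ 2 * (Real.exp (-(η * Real.sqrt x) ^ 2 / 2) / ((η * Real.sqrt x) * Real.sqrt (2 * Real.pi)))
          * (2 * chiSqPDF ν x) := by nlinarith
    have step3 : 2 * (Real.exp (-(η * Real.sqrt x) ^ 2 / 2) / ((η * Real.sqrt x) * Real.sqrt (2 * Real.pi)))
        * (2 * chiSqPDF ν x) = g x := by
      have hsq : (η * Real.sqrt x) ^ 2 = η ^ 2 * x := by
        rw [mul_pow, Real.sq_sqrt hx0.le]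
      have hexp : Real.exp (-(η ^ 2 * x) / 2) * Real.exp (-x / 2) = Real.exp (-(b * x)) := by
        rw [← Real.exp_add]; congr 1; simp only [hbdef]; ring
      have hxpow : x ^ (ν / 2 - 1) = x ^ (s - 1) * x ^ (1/2:ℝ) := by
        rw [← Real.rpow_add hx0, ← hsν]
      have hsx' : Real.sqrt x = x ^ (1/2:ℝ) := Real.sqrt_eq_rpow x
      have hxh : (0:ℝ) < x ^ (1/2:ℝ) := Real.rpow_pos_of_pos hx0 _
      unfold chiSqPDF
      simp only [hgdef, hCdef]
      rw [hsq, hxpow, hsx', ← hexp]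
      field_simp
      ring
    linarith [step1, step2, step3.le]
  have hnn : ∀ x ∈ Set.Ioi (0:ℝ),
      0 ≤ 2 * stdNormalCCDF (η * Real.sqrt x) *
        (2 * (1 - chiSqCDF ν x) * chiSqPDF ν x) := by
    intro x hx
    have hx0 : (0:ℝ) < x := hx
    have hf : 0 ≤ chiSqPDF ν x := chiSqPDF_nonneg ν hν x hx0.le
    have hccdf : 0 ≤ stdNormalCCDF (η * Real.sqrt x) := stdNormalCCDF_nonneg _
    have hF0 : 0 ≤ 1 - chiSqCDF ν x := by linarith [chiSqCDF_le_one ν hν x]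
    positivity
  have hmono : (∫ x in Set.Ioi (0:ℝ),
      2 * stdNormalCCDF (η * Real.sqrt x) *
        (2 * (1 - chiSqCDF ν x) * chiSqPDF ν x)) ≤ ∫ x in Set.Ioi (0:ℝ), g x := by
    refine integral_mono_of_nonneg ?_ hgint ?_
    · exact (ae_restrict_iff' measurableSet_Ioi).mpr (Filter.Eventually.of_forall hnn)
    · exact (ae_restrict_iff' measurableSet_Ioi).mpr (Filter.Eventually.of_forall hpt)
  refine hmono.trans_eq ?_
  -- compute the integral of g
  have hint : ∫ x in Set.Ioi (0:ℝ), g x = C * ((1 / b) ^ s * Real.Gamma s) := by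
    rw [hgdef]
    rw [MeasureTheory.integral_const_mul]
    rw [Real.integral_rpow_mul_exp_neg_mul_Ioi hs hb]
  rw [hint]
  -- final algebra
  have h1b : (1:ℝ) / b = 2 / (η ^ 2 + 1) := by rw [hbdef]; field_simp
  have hdiv : ((2:ℝ) / (η ^ 2 + 1)) ^ s = (2:ℝ) ^ s / (η ^ 2 + 1) ^ s :=
    Real.div_rpow (by norm_num) (by positivity) s
  have h2ν : (2:ℝ) ^ (ν / 2) = (2:ℝ) ^ s * Real.sqrt 2 := by
    have : ν / 2 = s + 1/2 := by simp only [hνdef, hsdef]; ring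
    rw [this, Real.rpow_add two_pos]
    congr 1
    rw [show ((2:ℝ) ^ (1/2:ℝ)) = Real.sqrt 2 from (Real.sqrt_eq_rpow 2).symm]
  have hsplit : Real.sqrt (2 * Real.pi) = Real.sqrt 2 * Real.sqrt Real.pi :=
    Real.sqrt_mul (by norm_num) _
  have h2s : (0:ℝ) < (2:ℝ) ^ s := Real.rpow_pos_of_pos two_pos s
  have hη2s : (0:ℝ) < (η ^ 2 + 1) ^ s := Real.rpow_pos_of_pos (by positivity) s
  have hπ : (0:ℝ) < Real.sqrt Real.pi := Real.sqrt_pos.mpr Real.pi_pos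
  have hs2 : (0:ℝ) < Real.sqrt 2 := by norm_num [Real.sqrt_pos]
  have hss : Real.sqrt 2 * Real.sqrt 2 = 2 := Real.mul_self_sqrt (by norm_num)
  rw [hCdef, hDdef, h1b, hdiv, h2ν, hsplit]
  field_simp
  linear_combination (-2) * hss
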